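/- (Theorem 1, probabilistic form) For each arm i ∈ {1, …, K}, let (X_{i,n})_{n≥1} be an i.i.d. sequence of random variables on a common probability space such that each X_{i,n} − μ_i has sub-Gaussian moment generating function with variance proxy σ², and run the UCB-with-attack process with θ = 1.1 path-wise on the pre-attack reward streams r⁰_i(n) = X_{i,n}. Then with probability at least 1 − δ the following holds simultaneously for all rounds t > K: every non-target arm i ≠ K satisfies N_i(t) ≤ ⌈log_θ(sqrt(log t))⌉, and the cumulative attack cost Σ_{s ≤ t} |α_s| is at most Σ_{i ≠ K} N_i(t)·(max(0, μ_i − μ_K) + 4β(N_i(t)) + 3θσ·sqrt(log t)). -/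

import Mathlib

open Real Finset MeasureTheory ProbabilityTheory

/-- `β(n) = sqrt((2σ²/n) · log(π²·K·n²/(3δ)))` for integers `n ≥ 1`. -/
noncomputable def attackBeta (σ : ℝ) (K : ℕ) (δ : ℝ) (n : ℕ) : ℝ :=
  Real.sqrt (2 * σ ^ 2 / n * Real.log (Real.pi ^ 2 * K * n ^ 2 / (3 * δ)))

section auxreal

variable {σ δ : ℝ} {K : ℕ}

lemma four_le_c (hK : 1 ≤ K) (hδ : 0 < δ) (hδ' : δ ≤ 1/2) :
    4 ≤ Real.pi ^ 2 * K / (3 * δ) := by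
  have hπ : (3:ℝ) ≤ Real.pi := Real.pi_gt_three.le
  have h9 : (9:ℝ) ≤ Real.pi ^ 2 := by nlinarith
  have hK1 : (1:ℝ) ≤ (K:ℝ) := by exact_mod_cast hK
  rw [le_div_iff₀ (by linarith)]
  nlinarith

lemma log_c_le_step (hK : 1 ≤ K) (hδ : 0 < δ) (hδ' : δ ≤ 1/2) {n : ℕ} (hn : 1 ≤ n) :
    Real.log (Real.pi ^ 2 * K * (n+1) ^ 2 / (3 * δ)) / (n+1)
      ≤ Real.log (Real.pi ^ 2 * K * n ^ 2 / (3 * δ)) / n := by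
  set c : ℝ := Real.pi ^ 2 * K / (3 * δ) with hc
  have h4 : 4 ≤ c := four_le_c hK hδ hδ'
  have hc0 : 0 < c := by linarith
  have hx : (1:ℝ) ≤ (n:ℝ) := by exact_mod_cast hn
  have hx0 : (0:ℝ) < (n:ℝ) := by linarith
  have hx10 : (0:ℝ) < (n:ℝ) + 1 := by linarith
  have e1 : Real.pi ^ 2 * K * (n+1) ^ 2 / (3 * δ) = c * ((n:ℝ)+1) ^ 2 := by
    rw [hc]; push_cast; field_simp
  have e2 : Real.pi ^ 2 * K * n ^ 2 / (3 * δ) = c * (n:ℝ) ^ 2 := by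
    rw [hc]; field_simp
  rw [e1, e2]
  rw [Real.log_mul hc0.ne' (by positivity), Real.log_mul hc0.ne' (by positivity),
    Real.log_pow, Real.log_pow]
  rw [div_le_div_iff₀ hx10 hx0]
  push_cast
  have hlogc : Real.log 4 ≤ Real.log c := Real.log_le_log (by norm_num) h4
  have hlog4 : Real.log 4 = 2 * Real.log 2 := by
    rw [show (4:ℝ) = 2^2 by norm_num, Real.log_pow]; push_cast; ring
  have hstep : Real.log ((n:ℝ)+1) - Real.log n ≤ 1 / n := by
    rw [← Real.log_div (by positivity) hx0.ne']
    have := Real.log_le_sub_one_of_pos (show (0:ℝ) < ((n:ℝ)+1)/n by positivity)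
    calc Real.log (((n:ℝ)+1)/n) ≤ ((n:ℝ)+1)/n - 1 := this
      _ = 1 / n := by field_simp; ring
  -- goal: (log c + 2 log(n+1)) * n ≤ (log c + 2 log n) * (n+1)
  rcases eq_or_lt_of_le hn with h1 | h2
  · -- n = 1
    have : (n:ℝ) = 1 := by exact_mod_cast h1.symm
    rw [this]
    simp only [Real.log_one]
    have : Real.log (1+1) = Real.log 2 := by norm_num
    rw [this]
    nlinarith
  · -- n ≥ 2
    have hn2 : (2:ℝ) ≤ (n:ℝ) := by exact_mod_cast h2
    have hlogn : Real.log 2 ≤ Real.log n := Real.log_le_log (by norm_num) hn2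
    have hlog2 : (0.6931471803:ℝ) < Real.log 2 := Real.log_two_gt_d9
    have hkey : 2 * (n:ℝ) * (Real.log ((n:ℝ)+1) - Real.log n) ≤ 2 := by
      have := mul_le_mul_of_nonneg_left hstep (show (0:ℝ) ≤ 2*(n:ℝ) by positivity)
      calc 2 * (n:ℝ) * (Real.log ((n:ℝ)+1) - Real.log n) ≤ 2 * (n:ℝ) * (1/n) := this
        _ = 2 := by field_simp
    nlinarith
end auxreal

section betalem
variable {σ δ : ℝ} {K : ℕ}

lemma c_n_sq_eq (hδ : 0 < δ) (n : ℕ) :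
    Real.pi ^ 2 * K * n ^ 2 / (3 * δ) = (Real.pi ^ 2 * K / (3 * δ)) * (n:ℝ) ^ 2 := by
  field_simp

lemma one_le_log_cn (hK : 1 ≤ K) (hδ : 0 < δ) (hδ' : δ ≤ 1/2) {n : ℕ} (hn : 1 ≤ n) :
    1 ≤ Real.log (Real.pi ^ 2 * K * n ^ 2 / (3 * δ)) := by
  have h4 : 4 ≤ Real.pi ^ 2 * K / (3 * δ) := four_le_c hK hδ hδ'
  have hx : (1:ℝ) ≤ (n:ℝ) := by exact_mod_cast hn
  have h4' : (4:ℝ) ≤ Real.pi ^ 2 * K * n ^ 2 / (3 * δ) := by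
    rw [c_n_sq_eq hδ]; nlinarith
  calc (1:ℝ) ≤ Real.log 4 := by
        rw [show (4:ℝ) = 2^2 by norm_num, Real.log_pow]
        have := Real.log_two_gt_d9; push_cast; linarith
    _ ≤ _ := Real.log_le_log (by norm_num) h4'

lemma attackBeta_nonneg : 0 ≤ attackBeta σ K δ n := Real.sqrt_nonneg _

lemma attackBeta_anti (hK : 1 ≤ K) (hδ : 0 < δ) (hδ' : δ ≤ 1/2) {n m : ℕ}
    (hn : 1 ≤ n) (hnm : n ≤ m) : attackBeta σ K δ m ≤ attackBeta σ K δ n := by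
  induction m with
  | zero => omega
  | succ m ih =>
    rcases Nat.lt_or_ge n (m+1) with h | h
    · have hm : 1 ≤ m := by omega
      have := ih (by omega)
      refine le_trans ?_ this
      unfold attackBeta
      apply Real.sqrt_le_sqrt
      have h1 : 2 * σ ^ 2 / ((m:ℝ)+1) * Real.log (Real.pi ^ 2 * K * (m+1) ^ 2 / (3 * δ))
          = 2 * σ ^ 2 * (Real.log (Real.pi ^ 2 * K * (m+1) ^ 2 / (3 * δ)) / ((m:ℝ)+1)) := by
        ring
      have h2 : 2 * σ ^ 2 / (m:ℝ) * Real.log (Real.pi ^ 2 * K * m ^ 2 / (3 * δ))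
          = 2 * σ ^ 2 * (Real.log (Real.pi ^ 2 * K * m ^ 2 / (3 * δ)) / (m:ℝ)) := by
        ring
      have hcast : ((m:ℝ)+1) = ((m+1 : ℕ) : ℝ) := by push_cast; ring
      rw [h2]
      calc 2 * σ ^ 2 / ((m+1:ℕ):ℝ) * Real.log (Real.pi ^ 2 * K * ((m+1:ℕ)) ^ 2 / (3 * δ))
          = 2 * σ ^ 2 * (Real.log (Real.pi ^ 2 * K * ((m:ℕ)+1) ^ 2 / (3 * δ)) / ((m:ℝ)+1)) := by
            push_cast; ring
        _ ≤ 2 * σ ^ 2 * (Real.log (Real.pi ^ 2 * K * m ^ 2 / (3 * δ)) / (m:ℝ)) := by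
            apply mul_le_mul_of_nonneg_left (log_c_le_step hK hδ hδ' hm) (by positivity)
    · have : n = m + 1 := by omega
      subst this; rfl

lemma mul_attackBeta_mono (hK : 1 ≤ K) (hδ : 0 < δ) (hδ' : δ ≤ 1/2) {n m : ℕ}
    (hn : 1 ≤ n) (hnm : n ≤ m) :
    (n:ℝ) * attackBeta σ K δ n ≤ (m:ℝ) * attackBeta σ K δ m := by
  have hm : 1 ≤ m := le_trans hn hnm
  have key : ∀ k : ℕ, 1 ≤ k → (k:ℝ) * attackBeta σ K δ k
      = Real.sqrt (2 * σ ^ 2 * k * Real.log (Real.pi ^ 2 * K * k ^ 2 / (3 * δ))) := by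
    intro k hk
    have hk0 : (0:ℝ) < (k:ℝ) := by exact_mod_cast hk
    unfold attackBeta
    rw [← Real.sqrt_sq hk0.le, ← Real.sqrt_mul (by positivity)]
    congr 1
    field_simp; rw [Real.sq_sqrt (by positivity)]; ring
  rw [key n hn, key m hm]
  apply Real.sqrt_le_sqrt
  have hL1 : 1 ≤ Real.log (Real.pi ^ 2 * K * n ^ 2 / (3 * δ)) := one_le_log_cn hK hδ hδ' hn
  have hL2 : Real.log (Real.pi ^ 2 * K * n ^ 2 / (3 * δ))
      ≤ Real.log (Real.pi ^ 2 * K * m ^ 2 / (3 * δ)) := by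
    apply Real.log_le_log
    · rw [c_n_sq_eq hδ]
      have h4 : 4 ≤ Real.pi ^ 2 * K / (3 * δ) := four_le_c hK hδ hδ'
      have hx : (1:ℝ) ≤ (n:ℝ) := by exact_mod_cast hn
      nlinarith
    · rw [c_n_sq_eq hδ, c_n_sq_eq hδ]
      have h4 : 4 ≤ Real.pi ^ 2 * K / (3 * δ) := four_le_c hK hδ hδ'
      have hx : (n:ℝ) ≤ (m:ℝ) := by exact_mod_cast hnm
      have hx0 : (0:ℝ) ≤ (n:ℝ) := by positivity
      apply mul_le_mul_of_nonneg_left _ (by linarith : (0:ℝ) ≤ Real.pi ^ 2 * K / (3 * δ))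
      nlinarith
  have hxn : (n:ℝ) ≤ (m:ℝ) := by exact_mod_cast hnm
  have hx0 : (0:ℝ) ≤ (n:ℝ) := by positivity
  calc 2 * σ ^ 2 * (n:ℝ) * Real.log (Real.pi ^ 2 * K * n ^ 2 / (3 * δ))
      = 2 * σ ^ 2 * ((n:ℝ) * Real.log (Real.pi ^ 2 * K * n ^ 2 / (3 * δ))) := by ring
    _ ≤ 2 * σ ^ 2 * ((m:ℝ) * Real.log (Real.pi ^ 2 * K * m ^ 2 / (3 * δ))) := by
        apply mul_le_mul_of_nonneg_left _ (by positivity)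
        exact mul_le_mul hxn hL2 (by linarith) (by positivity)
    _ = 2 * σ ^ 2 * (m:ℝ) * Real.log (Real.pi ^ 2 * K * m ^ 2 / (3 * δ)) := by ring

lemma attackBeta_sq (hK : 1 ≤ K) (hδ : 0 < δ) (hδ' : δ ≤ 1/2) {n : ℕ} (hn : 1 ≤ n) :
    attackBeta σ K δ n ^ 2 = 2 * σ ^ 2 / n * Real.log (Real.pi ^ 2 * K * n ^ 2 / (3 * δ)) := by
  unfold attackBeta
  apply Real.sq_sqrt
  have hL := one_le_log_cn (K := K) (δ := δ) hK hδ hδ' hn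
  have hx : (0:ℝ) < (n:ℝ) := by exact_mod_cast hn
  apply mul_nonneg (by positivity) (by linarith)
end betalem

lemma chernoff_tail {Ω : Type*} [MeasureSpace Ω] [IsProbabilityMeasure (ℙ : Measure Ω)]
    {σ : ℝ} (hσ : 0 < σ) (Y : ℕ → Ω → ℝ)
    (hYm : ∀ j, Measurable (Y j))
    (hYi : iIndepFun Y ℙ)
    (hYint : ∀ j (s : ℝ), Integrable (fun ω => Real.exp (s * Y j ω)) ℙ)
    (hYmgf : ∀ j (s : ℝ), ∫ ω, Real.exp (s * Y j ω) ≤ Real.exp (s ^ 2 * σ ^ 2 / 2))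
    (n : ℕ) (hn : 1 ≤ n) (a : ℝ) (ha : 0 ≤ a) :
    ℙ {ω | a ≤ ∑ j ∈ Finset.Icc 1 n, Y j ω} ≤
      ENNReal.ofReal (Real.exp (-(a ^ 2 / (2 * n * σ ^ 2)))) := by
  have hn0 : (0:ℝ) < (n:ℝ) := by exact_mod_cast hn
  set t : ℝ := a / (n * σ ^ 2) with hT
  have ht : 0 ≤ t := by positivity
  have hint : Integrable (fun ω => Real.exp (t * (∑ j ∈ Finset.Icc 1 n, Y j) ω)) ℙ :=
    hYi.integrable_exp_mul_sum hYm (fun j _ => hYint j t)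
  have hch := measure_ge_le_exp_mul_mgf (μ := ℙ) (X := ∑ j ∈ Finset.Icc 1 n, Y j)
    a ht hint
  have hmgf : mgf (∑ j ∈ Finset.Icc 1 n, Y j) ℙ t ≤ Real.exp (n * (t ^ 2 * σ ^ 2 / 2)) := by
    rw [hYi.mgf_sum hYm]
    calc ∏ j ∈ Finset.Icc 1 n, mgf (Y j) ℙ t
        ≤ ∏ j ∈ Finset.Icc 1 n, Real.exp (t ^ 2 * σ ^ 2 / 2) := by
          apply Finset.prod_le_prod (fun j _ => mgf_nonneg) (fun j _ => hYmgf j t)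
      _ = Real.exp (t ^ 2 * σ ^ 2 / 2) ^ (Finset.Icc 1 n).card := by
          rw [Finset.prod_const]
      _ = Real.exp (n * (t ^ 2 * σ ^ 2 / 2)) := by
          rw [Nat.card_Icc]
          simp only [Nat.add_sub_cancel]
          rw [← Real.exp_nat_mul]
  have hbound : (ℙ {ω | a ≤ (∑ j ∈ Finset.Icc 1 n, Y j) ω}).toReal
      ≤ Real.exp (-(a ^ 2 / (2 * n * σ ^ 2))) := by
    refine hch.trans ?_
    calc Real.exp (-t * a) * mgf (∑ j ∈ Finset.Icc 1 n, Y j) ℙ t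
        ≤ Real.exp (-t * a) * Real.exp (n * (t ^ 2 * σ ^ 2 / 2)) := by
          apply mul_le_mul_of_nonneg_left hmgf (Real.exp_nonneg _)
      _ = Real.exp (-t * a + n * (t ^ 2 * σ ^ 2 / 2)) := by rw [← Real.exp_add]
      _ = Real.exp (-(a ^ 2 / (2 * n * σ ^ 2))) := by
          congr 1
          rw [hT]
          field_simp
          ring
  have hne : ℙ {ω | a ≤ (∑ j ∈ Finset.Icc 1 n, Y j) ω} ≠ ⊤ := measure_ne_top _ _
  have := (ENNReal.le_ofReal_iff_toReal_le hne (Real.exp_nonneg _)).mpr hbound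
  convert this using 2
  ext ω
  simp [Finset.sum_apply]

lemma good_event_prob {Ω : Type*} [MeasureSpace Ω] [IsProbabilityMeasure (ℙ : Measure Ω)]
    (σ δ : ℝ) (K : ℕ) (hσ : 0 < σ) (hK : 1 ≤ K) (hδ : 0 < δ) (hδ' : δ ≤ 1 / 2)
    (μ : Fin K → ℝ) (X : Fin K → ℕ → Ω → ℝ)
    (hmeas : ∀ i n, Measurable (X i n))
    (hindep : ∀ i, iIndepFun (X i) ℙ)
    (hint : ∀ i n (s : ℝ), Integrable (fun ω => Real.exp (s * (X i n ω - μ i))) ℙ)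
    (hsub : ∀ i n (s : ℝ),
      ∫ ω, Real.exp (s * (X i n ω - μ i)) ≤ Real.exp (s ^ 2 * σ ^ 2 / 2)) :
    ENNReal.ofReal (1 - δ) ≤
      ℙ {ω | ∀ (i : Fin K) (n : ℕ), 1 ≤ n →
        |(∑ j ∈ Finset.Icc 1 n, X i j ω) / n - μ i| ≤ attackBeta σ K δ n} := by
  classical
  set A : Fin K → ℕ → Set Ω := fun i n =>
    {ω | |(∑ j ∈ Finset.Icc 1 (n+1), X i j ω) / ((n:ℝ)+1) - μ i| ≤ attackBeta σ K δ (n+1)}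
    with hA
  have hAm : ∀ i n, MeasurableSet (A i n) := by
    intro i n
    apply measurableSet_le _ measurable_const
    apply Measurable.abs
    apply Measurable.sub _ measurable_const
    exact (Finset.measurable_sum _ (fun j _ => hmeas i j)).div_const _
  have hGeq : {ω : Ω | ∀ (i : Fin K) (n : ℕ), 1 ≤ n →
      |(∑ j ∈ Finset.Icc 1 n, X i j ω) / n - μ i| ≤ attackBeta σ K δ n}
      = ⋂ (i : Fin K), ⋂ (n : ℕ), A i n := by
    ext ω
    simp only [Set.mem_setOf_eq, Set.mem_iInter, hA]
    constructor
    · intro h i n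
      have := h i (n+1) (by omega)
      convert this using 3 <;> push_cast <;> ring_nf
    · intro h i n hn
      obtain ⟨m, rfl⟩ := Nat.exists_eq_add_of_le hn
      rw [Nat.add_comm 1 m]
      have := h i m
      push_cast at this ⊢
      exact this
  rw [hGeq]
  have hGm : MeasurableSet (⋂ (i : Fin K), ⋂ (n : ℕ), A i n) :=
    MeasurableSet.iInter (fun i => MeasurableSet.iInter (fun n => hAm i n))
  set c : ℝ := Real.pi ^ 2 * K / (3 * δ) with hc
  have hc4 : 4 ≤ c := four_le_c hK hδ hδ'
  have hc0 : 0 < c := by linarith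
  -- bound on complement
  have hcompl : ℙ (⋂ (i : Fin K), ⋂ (n : ℕ), A i n)ᶜ ≤ ENNReal.ofReal δ := by
    rw [Set.compl_iInter]
    simp_rw [Set.compl_iInter]
    refine le_trans (measure_iUnion_le _) ?_
    have hper : ∀ (i : Fin K), ℙ (⋃ (n : ℕ), (A i n)ᶜ) ≤ ENNReal.ofReal (δ / K) := by
      intro i
      have hptail : ∀ n : ℕ, ℙ (A i n)ᶜ ≤ ENNReal.ofReal (2 / c * (1 / ((n:ℝ)+1) ^ 2)) := by
        intro n
        have hn1 : (0:ℝ) < (n:ℝ)+1 := by positivity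
        set β := attackBeta σ K δ (n+1) with hβ
        have hβ0 : 0 ≤ β := attackBeta_nonneg
        set a : ℝ := ((n:ℝ)+1) * β with ha
        have ha0 : 0 ≤ a := by positivity
        have hsubset : (A i n)ᶜ ⊆
            {ω | a ≤ ∑ j ∈ Finset.Icc 1 (n+1), (fun ω => X i j ω - μ i) ω} ∪
            {ω | a ≤ ∑ j ∈ Finset.Icc 1 (n+1), (fun ω => μ i - X i j ω) ω} := by
          intro ω hω
          simp only [Set.mem_compl_iff, Set.mem_setOf_eq, not_le, hA] at hω
          have habs : a < |(∑ j ∈ Finset.Icc 1 (n+1), X i j ω) - ((n:ℝ)+1) * μ i| := by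
            calc a = ((n:ℝ)+1) * β := ha
              _ < ((n:ℝ)+1) * |(∑ j ∈ Finset.Icc 1 (n+1), X i j ω) / ((n:ℝ)+1) - μ i| :=
                  (mul_lt_mul_iff_right₀ hn1).mpr hω
              _ = |((n:ℝ)+1) * ((∑ j ∈ Finset.Icc 1 (n+1), X i j ω) / ((n:ℝ)+1) - μ i)| := by
                  rw [abs_mul, abs_of_pos hn1]
              _ = |(∑ j ∈ Finset.Icc 1 (n+1), X i j ω) - ((n:ℝ)+1) * μ i| := by
                  congr 1; field_simp
          rcases lt_abs.mp habs with h | h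
          · left
            simp only [Set.mem_setOf_eq]
            rw [Finset.sum_sub_distrib, Finset.sum_const, Nat.card_Icc]
            simp only [Nat.add_sub_cancel, nsmul_eq_mul]
            push_cast
            linarith
          · right
            simp only [Set.mem_setOf_eq]
            rw [Finset.sum_sub_distrib, Finset.sum_const, Nat.card_Icc]
            simp only [Nat.add_sub_cancel, nsmul_eq_mul]
            push_cast
            linarith
        have hmeas1 : ∀ j, Measurable (fun ω => X i j ω - μ i) :=
          fun j => (hmeas i j).sub measurable_const
        have hmeas2 : ∀ j, Measurable (fun ω => μ i - X i j ω) :=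
          fun j => measurable_const.sub (hmeas i j)
        have hind1 : iIndepFun (fun j ω => X i j ω - μ i) ℙ :=
          (hindep i).comp (fun _ x => x - μ i) (fun _ => measurable_id.sub measurable_const)
        have hind2 : iIndepFun (fun j ω => μ i - X i j ω) ℙ :=
          (hindep i).comp (fun _ x => μ i - x) (fun _ => measurable_const.sub measurable_id)
        have hint2 : ∀ j (s : ℝ), Integrable (fun ω => Real.exp (s * (μ i - X i j ω))) ℙ := by
          intro j s
          have := hint i j (-s)
          convert this using 2 with ω
          ring_nf
        have hmgf2 : ∀ j (s : ℝ),
            ∫ ω, Real.exp (s * (μ i - X i j ω)) ≤ Real.exp (s ^ 2 * σ ^ 2 / 2) := by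
          intro j s
          have := hsub i j (-s)
          rw [neg_pow, neg_one_pow_eq_one_iff_even (by norm_num : (-1:ℝ) ≠ 1) |>.mpr
            (by norm_num)] at this
          · calc ∫ ω, Real.exp (s * (μ i - X i j ω))
                = ∫ ω, Real.exp ((-s) * (X i j ω - μ i)) := by
                  congr 1 with ω; ring_nf
              _ ≤ Real.exp ((-s) ^ 2 * σ ^ 2 / 2) := hsub i j (-s)
              _ = Real.exp (s ^ 2 * σ ^ 2 / 2) := by rw [neg_pow_two]
        have htail1 := chernoff_tail hσ _ hmeas1 hind1 (fun j s => hint i j s)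
          (fun j s => hsub i j s) (n+1) (by omega) a ha0
        have htail2 := chernoff_tail hσ _ hmeas2 hind2 hint2 hmgf2 (n+1) (by omega) a ha0
        have hval : Real.exp (-(a ^ 2 / (2 * ((n+1:ℕ):ℝ) * σ ^ 2))) = 1 / (c * ((n:ℝ)+1) ^ 2) := by
          have hβsq : β ^ 2 = 2 * σ ^ 2 / ((n+1:ℕ):ℝ)
              * Real.log (Real.pi ^ 2 * K * ((n+1:ℕ):ℝ) ^ 2 / (3 * δ)) :=
            attackBeta_sq hK hδ hδ' (by omega)
          have hcast : ((n+1:ℕ):ℝ) = (n:ℝ)+1 := by push_cast; ring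
          rw [hcast] at hβsq
          have hargpos : 0 < c * ((n:ℝ)+1) ^ 2 := by positivity
          have hlogarg : Real.pi ^ 2 * K * ((n:ℝ)+1) ^ 2 / (3 * δ) = c * ((n:ℝ)+1) ^ 2 := by
            rw [hc]; field_simp
          have hexp : a ^ 2 / (2 * ((n+1:ℕ):ℝ) * σ ^ 2) = Real.log (c * ((n:ℝ)+1) ^ 2) := by
            rw [hcast, ha]
            have : (((n:ℝ)+1) * β) ^ 2 = ((n:ℝ)+1) ^ 2 * β ^ 2 := by ring
            rw [this, hβsq, hlogarg]
            field_simp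
          rw [hexp, Real.exp_neg, Real.exp_log hargpos]
          rw [one_div]
        calc ℙ (A i n)ᶜ
            ≤ ℙ ({ω | a ≤ ∑ j ∈ Finset.Icc 1 (n+1), (fun ω => X i j ω - μ i) ω} ∪
              {ω | a ≤ ∑ j ∈ Finset.Icc 1 (n+1), (fun ω => μ i - X i j ω) ω}) :=
              measure_mono hsubset
          _ ≤ ℙ {ω | a ≤ ∑ j ∈ Finset.Icc 1 (n+1), (fun ω => X i j ω - μ i) ω} +
              ℙ {ω | a ≤ ∑ j ∈ Finset.Icc 1 (n+1), (fun ω => μ i - X i j ω) ω} :=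
              measure_union_le _ _
          _ ≤ ENNReal.ofReal (Real.exp (-(a ^ 2 / (2 * ((n+1:ℕ):ℝ) * σ ^ 2)))) +
              ENNReal.ofReal (Real.exp (-(a ^ 2 / (2 * ((n+1:ℕ):ℝ) * σ ^ 2)))) :=
              add_le_add htail1 htail2
          _ = ENNReal.ofReal (2 / c * (1 / ((n:ℝ)+1) ^ 2)) := by
              rw [← ENNReal.ofReal_add (Real.exp_nonneg _) (Real.exp_nonneg _)]
              congr 1
              rw [hval]
              field_simp
              norm_num
      -- sum the tails
      have hz := hasSum_zeta_two
      have h1 : HasSum (fun n : ℕ => (1:ℝ)/((n:ℝ)+1)^2) (Real.pi^2/6) := by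
        have h0 : HasSum (fun n : ℕ => (1:ℝ)/((n+1:ℕ):ℝ)^2) (Real.pi^2/6) := by
          refine (hasSum_nat_add_iff (f := fun n : ℕ => (1:ℝ)/(n:ℝ)^2) 1).mpr ?_
          have : (Real.pi^2/6 + ∑ i ∈ Finset.range 1, (1:ℝ)/(i:ℝ)^2) = Real.pi^2/6 := by
            norm_num
          rw [this]
          exact hz
        convert h0 using 2 with n
        push_cast
        ring
      have h2 : HasSum (fun n : ℕ => 2/c * (1/((n:ℝ)+1)^2)) (2/c * (Real.pi^2/6)) :=
        h1.mul_left _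
      calc ℙ (⋃ (n : ℕ), (A i n)ᶜ) ≤ ∑' (n : ℕ), ℙ (A i n)ᶜ := measure_iUnion_le _
        _ ≤ ∑' (n : ℕ), ENNReal.ofReal (2 / c * (1 / ((n:ℝ)+1) ^ 2)) :=
            ENNReal.tsum_le_tsum hptail
        _ = ENNReal.ofReal (2/c * (Real.pi^2/6)) := by
            rw [← ENNReal.ofReal_tsum_of_nonneg (fun n => by positivity) h2.summable,
              h2.tsum_eq]
        _ = ENNReal.ofReal (δ / K) := by
            congr 1
            rw [hc]
            have hπ : Real.pi ≠ 0 := Real.pi_ne_zero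
            have hKr : (K:ℝ) ≠ 0 := by positivity
            field_simp
            ring
    calc ∑' (i : Fin K), ℙ (⋃ (n : ℕ), (A i n)ᶜ)
        ≤ ∑' (i : Fin K), ENNReal.ofReal (δ / K) := ENNReal.tsum_le_tsum hper
      _ = (K : ENNReal) * ENNReal.ofReal (δ / K) := by
          rw [tsum_fintype]
          simp [Finset.card_univ, mul_comm]
      _ = ENNReal.ofReal δ := by
          rw [← ENNReal.ofReal_natCast K, ← ENNReal.ofReal_mul (by positivity)]
          congr 1
          have hKr : (K:ℝ) ≠ 0 := by positivity
          field_simp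
  -- conclude
  have hG := prob_compl_eq_one_sub (μ := ℙ) hGm
  rw [hG] at hcompl
  have h1 : (1:ENNReal) ≤ ENNReal.ofReal δ + ℙ (⋂ (i : Fin K), ⋂ (n : ℕ), A i n) :=
    tsub_le_iff_right.mp hcompl
  calc ENNReal.ofReal (1 - δ) = 1 - ENNReal.ofReal δ := by
        rw [ENNReal.ofReal_sub 1 hδ.le, ENNReal.ofReal_one]
    _ ≤ ℙ (⋂ (i : Fin K), ⋂ (n : ℕ), A i n) := by
        rw [tsub_le_iff_right, add_comm]
        exact h1

lemma det_lemma
    (σ δ : ℝ) (K : ℕ) (hσ : 0 < σ) (hK : 1 ≤ K) (hδ : 0 < δ) (hδ' : δ ≤ 1 / 2)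
    (μ : Fin K → ℝ) (x : Fin K → ℕ → ℝ) (tgt : Fin K)
    (I : ℕ → Fin K) (N : Fin K → ℕ → ℕ)
    (hatμ0 hatμ : Fin K → ℕ → ℝ) (α : ℕ → ℝ)
    (hN : ∀ i t, N i t = ((Finset.Icc 1 t).filter (fun s => I s = i)).card)
    (hI1 : I 1 = tgt)
    (hinit : ∀ i, N i K = 1)
    (hμ0 : ∀ i t, 1 ≤ N i t →
      hatμ0 i t = (∑ j ∈ Finset.Icc 1 (N i t), x i j) / (N i t))
    (hμ : ∀ i t, 1 ≤ N i t →
      hatμ i t = ((∑ j ∈ Finset.Icc 1 (N i t), x i j)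
        - ∑ s ∈ (Finset.Icc 1 t).filter (fun s => I s = i), α s) / (N i t))
    (hUCB : ∀ t, K < t → ∀ i : Fin K,
      hatμ i (t - 1) + 3 * σ * Real.sqrt (Real.log t / N i (t - 1))
        ≤ hatμ (I t) (t - 1) + 3 * σ * Real.sqrt (Real.log t / N (I t) (t - 1)))
    (hαtgt : ∀ t, I t = tgt → α t = 0)
    (hatk : ∀ t, 1 ≤ t → I t ≠ tgt →
      0 ≤ α t ∧
      hatμ (I t) t ≤ hatμ tgt t - 2 * attackBeta σ K δ (N tgt t)
        - 3 * σ * (1.1 : ℝ) ^ (N (I t) t) ∧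
      (α t ≠ 0 → hatμ (I t) t = hatμ tgt t - 2 * attackBeta σ K δ (N tgt t)
        - 3 * σ * (1.1 : ℝ) ^ (N (I t) t)))
    (hgood : ∀ i (n : ℕ), 1 ≤ n →
      |(∑ j ∈ Finset.Icc 1 n, x i j) / n - μ i| ≤ attackBeta σ K δ n)
    (t : ℕ) (ht : K < t) :
    (∀ i : Fin K, i ≠ tgt →
      (N i t : ℤ) ≤ ⌈Real.logb 1.1 (Real.sqrt (Real.log t))⌉) ∧
    ∑ s ∈ Finset.Icc 1 t, |α s| ≤
      ∑ i ∈ Finset.univ.filter (fun i => i ≠ tgt),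
        (N i t : ℝ) * (max 0 (μ i - μ tgt) + 4 * attackBeta σ K δ (N i t)
          + 3 * 1.1 * σ * Real.sqrt (Real.log t)) := by
  classical
  -- basic facts about pull counts
  have hNmono : ∀ (i : Fin K) {s u : ℕ}, s ≤ u → N i s ≤ N i u := by
    intro i s u h
    rw [hN, hN]
    exact Finset.card_le_card (Finset.filter_subset_filter _ (Finset.Icc_subset_Icc le_rfl h))
  have hNsucc : ∀ (i : Fin K) (u : ℕ),
      N i (u+1) = if I (u+1) = i then N i u + 1 else N i u := by
    intro i u
    rw [hN, hN]
    rw [show Finset.Icc 1 (u+1) = insert (u+1) (Finset.Icc 1 u) from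
      (Finset.insert_Icc_right_eq_Icc_add_one (by omega)).symm]
    rw [Finset.filter_insert]
    split
    · rw [Finset.card_insert_of_notMem (by
        intro hmem
        have := Finset.mem_Icc.mp (Finset.mem_of_mem_filter _ hmem)
        omega)]
    · rfl
  have hNone : ∀ (i : Fin K) {u : ℕ}, K ≤ u → 1 ≤ N i u := by
    intro i u h
    have := hNmono i h
    rw [hinit i] at this
    exact this
  have hNtgt1 : ∀ {u : ℕ}, 1 ≤ u → 1 ≤ N tgt u := by
    intro u h
    rw [hN]
    apply Finset.card_pos.mpr
    exact ⟨1, Finset.mem_filter.mpr ⟨Finset.mem_Icc.mpr ⟨le_rfl, h⟩, hI1⟩⟩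
  have hNinit1 : ∀ (i : Fin K) {u : ℕ}, u ≤ K → N i u ≤ 1 := by
    intro i u h
    have := hNmono i h
    rw [hinit i] at this
    exact this
  -- last pull
  have hlast : ∀ (i : Fin K) (u : ℕ), 1 ≤ N i u →
      ∃ s, 1 ≤ s ∧ s ≤ u ∧ I s = i ∧
        (Finset.Icc 1 s).filter (fun v => I v = i)
          = (Finset.Icc 1 u).filter (fun v => I v = i) := by
    intro i u h
    set P := (Finset.Icc 1 u).filter (fun v => I v = i) with hP
    have hne : P.Nonempty := by
      rw [← Finset.card_pos]
      rw [hN, ← hP] at h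
      omega
    refine ⟨P.max' hne, ?_, ?_, ?_, ?_⟩
    · have := Finset.mem_Icc.mp (Finset.mem_of_mem_filter _ (P.max'_mem hne))
      omega
    · have := Finset.mem_Icc.mp (Finset.mem_of_mem_filter _ (P.max'_mem hne))
      omega
    · exact (Finset.mem_filter.mp (P.max'_mem hne)).2
    · ext v
      constructor
      · intro hv
        obtain ⟨hv1, hv2⟩ := Finset.mem_filter.mp hv
        obtain ⟨ha, hb⟩ := Finset.mem_Icc.mp hv1
        have hst := Finset.mem_Icc.mp (Finset.mem_of_mem_filter _ (P.max'_mem hne))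
        exact Finset.mem_filter.mpr ⟨Finset.mem_Icc.mpr ⟨ha, by omega⟩, hv2⟩
      · intro hv
        refine Finset.mem_filter.mpr ⟨Finset.mem_Icc.mpr ⟨?_, P.le_max' v hv⟩,
          (Finset.mem_filter.mp hv).2⟩
        have := Finset.mem_Icc.mp (Finset.mem_of_mem_filter _ hv)
        omega
  -- the target arm is never attacked
  have htgtμ : ∀ (u : ℕ), 1 ≤ u →
      hatμ tgt u = (∑ j ∈ Finset.Icc 1 (N tgt u), x tgt j) / (N tgt u) := by
    intro u hu
    rw [hμ tgt u (hNtgt1 hu)]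
    have hz : ∑ s ∈ (Finset.Icc 1 u).filter (fun s => I s = tgt), α s = 0 :=
      Finset.sum_eq_zero (fun s hs => hαtgt s (Finset.mem_filter.mp hs).2)
    rw [hz, sub_zero]
  -- good-event bounds on the target empirical mean
  have htgt_ub : ∀ (u : ℕ), 1 ≤ u → hatμ tgt u ≤ μ tgt + attackBeta σ K δ (N tgt u) := by
    intro u hu
    have h := hgood tgt (N tgt u) (hNtgt1 hu)
    rw [htgtμ u hu]
    have := (abs_le.mp h).2
    linarith
  have htgt_lb : ∀ (u : ℕ), 1 ≤ u → μ tgt - attackBeta σ K δ (N tgt u) ≤ hatμ tgt u := by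
    intro u hu
    have h := hgood tgt (N tgt u) (hNtgt1 hu)
    rw [htgtμ u hu]
    have := (abs_le.mp h).1
    linarith
  -- KEY invariant
  have hKEY : ∀ (u : ℕ), K ≤ u → ∀ i : Fin K, i ≠ tgt →
      hatμ i u + 3 * σ * (1.1:ℝ) ^ (N i u) ≤ hatμ tgt u := by
    intro u hu i hi
    obtain ⟨s, hs1, hsu, hIs, hfilt⟩ := hlast i u (hNone i hu)
    have hNs : N i s = N i u := by rw [hN, hN, hfilt]
    have hμeq : hatμ i s = hatμ i u := by
      rw [hμ i s (by rw [hNs]; exact hNone i hu), hμ i u (hNone i hu), hNs, hfilt]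
    have hatk' := hatk s hs1 (by rw [hIs]; exact hi)
    have hinv := hatk'.2.1
    rw [hIs] at hinv
    have hms1 : 1 ≤ N tgt s := hNtgt1 hs1
    have hmsu : N tgt s ≤ N tgt u := hNmono tgt hsu
    have hβ : attackBeta σ K δ (N tgt u) ≤ attackBeta σ K δ (N tgt s) :=
      attackBeta_anti hK hδ hδ' hms1 hmsu
    have h1 : hatμ tgt s ≤ μ tgt + attackBeta σ K δ (N tgt s) := htgt_ub s hs1
    have h2 : μ tgt - attackBeta σ K δ (N tgt u) ≤ hatμ tgt u :=
      htgt_lb u (le_trans hs1 hsu)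
    rw [hμeq, hNs] at hinv
    linarith
  -- consequence of a pull of a non-target arm after initialization
  have hPULL : ∀ (u : ℕ), K < u → I u ≠ tgt →
      (1.1:ℝ) ^ (N (I u) (u-1)) < Real.sqrt (Real.log u) ∧
      N (I u) (u-1) < N tgt (u-1) := by
    intro u hu hIu
    set i := I u with hi
    have hu2 : 2 ≤ u := by omega
    have hKu : K ≤ u - 1 := by omega
    have hL : 0 < Real.log u := by
      apply Real.log_pos
      exact_mod_cast (by omega : 1 < u)
    have hn1 : 1 ≤ N i (u-1) := hNone i hKu
    have hm1 : 1 ≤ N tgt (u-1) := hNone tgt hKu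
    have hnR : (1:ℝ) ≤ (N i (u-1) : ℝ) := by exact_mod_cast hn1
    have hmR : (1:ℝ) ≤ (N tgt (u-1) : ℝ) := by exact_mod_cast hm1
    have hucb := hUCB u hu tgt
    have hkey := hKEY (u-1) hKu i hIu
    rw [← hi] at hucb
    have h3σ : (0:ℝ) < 3 * σ := by linarith
    have hmain : (1.1:ℝ) ^ (N i (u-1)) + Real.sqrt (Real.log u / N tgt (u-1))
        ≤ Real.sqrt (Real.log u / N i (u-1)) := by
      have := le_of_mul_le_mul_left (by nlinarith [hucb, hkey] :
        (3 * σ) * ((1.1:ℝ) ^ (N i (u-1)) + Real.sqrt (Real.log u / N tgt (u-1)))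
          ≤ (3 * σ) * Real.sqrt (Real.log u / N i (u-1))) h3σ
      exact this
    have hsm : (0:ℝ) < Real.sqrt (Real.log u / N tgt (u-1)) := by
      apply Real.sqrt_pos.mpr
      positivity
    have hθpos : (0:ℝ) < (1.1:ℝ) ^ (N i (u-1)) := by positivity
    constructor
    · calc (1.1:ℝ) ^ (N i (u-1)) < Real.sqrt (Real.log u / N i (u-1)) := by linarith
        _ ≤ Real.sqrt (Real.log u) := by
            apply Real.sqrt_le_sqrt
            rw [div_le_iff₀ (by linarith)]
            nlinarith
    · have hlt : Real.sqrt (Real.log u / N tgt (u-1))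
          < Real.sqrt (Real.log u / N i (u-1)) := by linarith
      have hdiv : Real.log u / (N tgt (u-1) : ℝ) < Real.log u / (N i (u-1) : ℝ) := by
        by_contra hcon
        push_neg at hcon
        exact absurd (Real.sqrt_le_sqrt hcon) (not_le.mpr hlt)
      have : (N i (u-1) : ℝ) < (N tgt (u-1) : ℝ) := by
        rw [div_lt_div_iff₀ (by linarith) (by linarith)] at hdiv
        nlinarith
      exact_mod_cast this
  -- non-target arms never overtake the target
  have hNLE : ∀ (u : ℕ), 1 ≤ u → ∀ i : Fin K, i ≠ tgt → N i u ≤ N tgt u := by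
    intro u
    induction u with
    | zero => omega
    | succ v ih =>
      intro _ i hi
      rcases Nat.lt_or_ge v K with hvK | hvK
      · -- v + 1 ≤ K
        calc N i (v+1) ≤ 1 := hNinit1 i (by omega)
          _ ≤ N tgt (v+1) := hNtgt1 (by omega)
      · -- K ≤ v
        have hv1 : 1 ≤ v := by omega
        have ihv := ih hv1 i hi
        rw [hNsucc i v, hNsucc tgt v]
        rcases eq_or_ne (I (v+1)) tgt with htgtpull | hnot
        · rw [if_pos htgtpull, if_neg (by rw [htgtpull]; exact fun h => hi h.symm)]
          omega
        · rw [if_neg hnot]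
          rcases eq_or_ne (I (v+1)) i with hipull | hinot
          · rw [if_pos hipull]
            have := (hPULL (v+1) (by omega) hnot).2
            rw [Nat.add_sub_cancel, hipull] at this
            omega
          · rw [if_neg hinot]
            omega
  -- general facts about t
  have htR : (1:ℝ) < (t:ℝ) := by exact_mod_cast (by omega : 1 < t)
  have hlogt : 0 < Real.log t := Real.log_pos htR
  have hsqrtt : 0 < Real.sqrt (Real.log t) := Real.sqrt_pos.mpr hlogt
  have hlog3 : 3 ≤ t → (1:ℝ) < Real.log t := by
    intro h3
    have he : Real.exp 1 < (t:ℝ) := by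
      have h9 := Real.exp_one_lt_d9
      have : (3:ℝ) ≤ (t:ℝ) := by exact_mod_cast h3
      linarith
    calc (1:ℝ) = Real.log (Real.exp 1) := (Real.log_exp 1).symm
      _ < Real.log t := Real.log_lt_log (Real.exp_pos 1) he
  have hsqrt3 : 3 ≤ t → (1:ℝ) < Real.sqrt (Real.log t) := by
    intro h3
    have := hlog3 h3
    calc (1:ℝ) = Real.sqrt 1 := Real.sqrt_one.symm
      _ < Real.sqrt (Real.log t) := Real.sqrt_lt_sqrt (by norm_num) this
  -- Part 1: pull count bound
  have hCOUNT : ∀ i : Fin K, i ≠ tgt →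
      (N i t : ℤ) ≤ ⌈Real.logb 1.1 (Real.sqrt (Real.log t))⌉ := by
    intro i hi
    obtain ⟨s, hs1, hst, hIs, hfilt⟩ := hlast i t (hNone i ht.le)
    have hNs : N i s = N i t := by rw [hN, hN, hfilt]
    have hs2 : 2 ≤ s := by
      rcases eq_or_ne s 1 with h | h
      · exfalso
        apply hi
        rw [← hIs, h, hI1]
      · omega
    rcases le_or_gt s K with hsK | hsK
    · have hNt1 : N i t = 1 := le_antisymm (by rw [← hNs]; exact hNinit1 i hsK)
        (hNone i ht.le)
      rw [hNt1]
      have h3t : 3 ≤ t := by omega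
      have hpos : (0:ℤ) < ⌈Real.logb 1.1 (Real.sqrt (Real.log t))⌉ := by
        rw [Int.lt_ceil]
        push_cast
        exact Real.logb_pos (by norm_num) (hsqrt3 h3t)
      omega
    · have hp := (hPULL s hsK (by rw [hIs]; exact hi)).1
      rw [hIs] at hp
      have hNss : N i s = N i (s-1) + 1 := by
        have h := hNsucc i (s-1)
        rw [show s - 1 + 1 = s by omega] at h
        rw [h, if_pos hIs]
      have hmono : Real.sqrt (Real.log s) ≤ Real.sqrt (Real.log t) := by
        apply Real.sqrt_le_sqrt
        apply Real.log_le_log (by exact_mod_cast (by omega : 0 < s))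
        exact_mod_cast hst
      have hlt : ((N i (s-1) : ℕ) : ℤ) < ⌈Real.logb 1.1 (Real.sqrt (Real.log t))⌉ := by
        rw [Int.lt_ceil]
        push_cast
        apply (Real.lt_logb_iff_rpow_lt (by norm_num) hsqrtt).mpr
        rw [Real.rpow_natCast]
        exact lt_of_lt_of_le hp hmono
      omega
  -- Part 2: cost bound
  have hsum_eq : ∑ s ∈ Finset.Icc 1 t, |α s|
      = ∑ i ∈ Finset.univ.filter (fun i => i ≠ tgt),
          ∑ s ∈ (Finset.Icc 1 t).filter (fun s => I s = i), |α s| := by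
    have h1 := Finset.sum_fiberwise_eq_sum_filter (Finset.Icc 1 t)
      (Finset.univ : Finset (Fin K)) I (fun s => |α s|)
    simp only [Finset.mem_univ, Finset.filter_true] at h1
    rw [← h1]
    symm
    apply Finset.sum_subset (Finset.filter_subset _ _)
    intro i _ hnot
    have hieq : i = tgt := by simpa using hnot
    subst hieq
    exact Finset.sum_eq_zero (fun s hs => by
      rw [hαtgt s (Finset.mem_filter.mp hs).2, abs_zero])
  have hper : ∀ i : Fin K, i ≠ tgt →
      ∑ s ∈ (Finset.Icc 1 t).filter (fun s => I s = i), |α s|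
        ≤ (N i t : ℝ) * (max 0 (μ i - μ tgt) + 4 * attackBeta σ K δ (N i t)
            + 3 * 1.1 * σ * Real.sqrt (Real.log t)) := by
    intro i hi
    have hβt0 : 0 ≤ attackBeta σ K δ (N i t) := attackBeta_nonneg
    have hmax0 : (0:ℝ) ≤ max 0 (μ i - μ tgt) := le_max_left _ _
    have hRHS0 : 0 ≤ (N i t : ℝ) * (max 0 (μ i - μ tgt) + 4 * attackBeta σ K δ (N i t)
        + 3 * 1.1 * σ * Real.sqrt (Real.log t)) := by
      apply mul_nonneg (by positivity)
      have : (0:ℝ) ≤ 3 * 1.1 * σ * Real.sqrt (Real.log t) := by positivity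
      linarith
    have habs : ∀ s ∈ (Finset.Icc 1 t).filter (fun s => I s = i), |α s| = α s := by
      intro s hs
      obtain ⟨hsI, hsi⟩ := Finset.mem_filter.mp hs
      obtain ⟨h1s, _⟩ := Finset.mem_Icc.mp hsI
      exact abs_of_nonneg (hatk s h1s (by rw [hsi]; exact hi)).1
    rw [Finset.sum_congr rfl habs]
    set Q := ((Finset.Icc 1 t).filter (fun s => I s = i)).filter (fun s => α s ≠ 0) with hQ
    rcases Q.eq_empty_or_nonempty with hQe | hQne
    · have hz : ∑ s ∈ (Finset.Icc 1 t).filter (fun s => I s = i), α s = 0 := by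
        apply Finset.sum_eq_zero
        intro s hs
        by_contra hne
        have : s ∈ Q := Finset.mem_filter.mpr ⟨hs, hne⟩
        rw [hQe] at this
        exact absurd this (Finset.notMem_empty s)
      rw [hz]
      exact hRHS0
    · set sm := Q.max' hQne with hsm
      have hsQ : sm ∈ Q := Q.max'_mem hQne
      have hsP : sm ∈ (Finset.Icc 1 t).filter (fun s => I s = i) :=
        Finset.mem_of_mem_filter _ hsQ
      have hα0 : α sm ≠ 0 := (Finset.mem_filter.mp hsQ).2
      have hIss : I sm = i := (Finset.mem_filter.mp hsP).2
      obtain ⟨hs1, hstt⟩ := Finset.mem_Icc.mp (Finset.mem_of_mem_filter _ hsP)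
      have hsplit : ∑ s ∈ (Finset.Icc 1 t).filter (fun s => I s = i), α s
          = ∑ s ∈ (Finset.Icc 1 sm).filter (fun s => I s = i), α s := by
        rw [← Finset.sum_filter_add_sum_filter_not
          ((Finset.Icc 1 t).filter (fun s => I s = i)) (fun s => s ≤ sm)]
        have hz : ∑ s ∈ ((Finset.Icc 1 t).filter (fun s => I s = i)).filter
            (fun s => ¬ s ≤ sm), α s = 0 := by
          apply Finset.sum_eq_zero
          intro s hs
          obtain ⟨hsP', hsgt⟩ := Finset.mem_filter.mp hs
          by_contra hne
          have : s ∈ Q := Finset.mem_filter.mpr ⟨hsP', hne⟩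
          exact hsgt (Q.le_max' s this)
        rw [hz, add_zero]
        congr 1
        ext v
        simp only [Finset.mem_filter, Finset.mem_Icc]
        constructor
        · rintro ⟨⟨⟨h1, h2⟩, h3⟩, h4⟩
          exact ⟨⟨h1, h4⟩, h3⟩
        · rintro ⟨⟨h1, h2⟩, h3⟩
          exact ⟨⟨⟨h1, by omega⟩, h3⟩, h2⟩
      have hn1 : 1 ≤ N i sm := by
        rw [hN]
        exact Finset.card_pos.mpr
          ⟨sm, Finset.mem_filter.mpr ⟨Finset.mem_Icc.mpr ⟨hs1, le_rfl⟩, hIss⟩⟩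
      have hnt : N i sm ≤ N i t := hNmono i hstt
      have hnR : (0:ℝ) < (N i sm : ℝ) := by exact_mod_cast hn1
      have hAeq : ∑ s ∈ (Finset.Icc 1 sm).filter (fun s => I s = i), α s
          = (N i sm : ℝ) * (hatμ0 i sm - hatμ i sm) := by
        rw [hμ0 i sm hn1, hμ i sm hn1]
        field_simp
        ring
      have hatkfull := hatk sm hs1 (by rw [hIss]; exact hi)
      have heq := hatkfull.2.2 hα0
      rw [hIss] at heq
      have hm1 : 1 ≤ N tgt sm := hNtgt1 hs1
      have hmn : N i sm ≤ N tgt sm := hNLE sm hs1 i hi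
      have hβmn : attackBeta σ K δ (N tgt sm) ≤ attackBeta σ K δ (N i sm) :=
        attackBeta_anti hK hδ hδ' hn1 hmn
      have hβsm0 : 0 ≤ attackBeta σ K δ (N i sm) := attackBeta_nonneg
      have hub0 : hatμ0 i sm ≤ μ i + attackBeta σ K δ (N i sm) := by
        rw [hμ0 i sm hn1]
        have := (abs_le.mp (hgood i (N i sm) hn1)).2
        linarith
      have hlbt : μ tgt - attackBeta σ K δ (N tgt sm) ≤ hatμ tgt sm := htgt_lb sm hs1
      have hθ : (1.1:ℝ) ^ (N i sm) ≤ 1.1 * Real.sqrt (Real.log t) := by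
        rcases le_or_gt sm K with hsK | hsK
        · have hs2 : 2 ≤ sm := by
            rcases eq_or_ne sm 1 with h | h
            · exfalso; apply hi; rw [← hIss, h, hI1]
            · omega
          have h3t : 3 ≤ t := by omega
          have hNsm1 : N i sm = 1 := le_antisymm (hNinit1 i hsK) hn1
          rw [hNsm1, pow_one]
          have h1 := (hsqrt3 h3t).le
          calc (1.1:ℝ) = 1.1 * 1 := by norm_num
            _ ≤ 1.1 * Real.sqrt (Real.log t) :=
                mul_le_mul_of_nonneg_left h1 (by norm_num)
        · have hp := (hPULL sm hsK (by rw [hIss]; exact hi)).1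
          rw [hIss] at hp
          have hNss : N i sm = N i (sm-1) + 1 := by
            have h := hNsucc i (sm-1)
            rw [show sm - 1 + 1 = sm by omega] at h
            rw [h, if_pos hIss]
          have hmono : Real.sqrt (Real.log sm) ≤ Real.sqrt (Real.log t) := by
            apply Real.sqrt_le_sqrt
            apply Real.log_le_log (by exact_mod_cast (by omega : 0 < sm))
            exact_mod_cast hstt
          rw [hNss, pow_succ]
          have hp' : (1.1:ℝ) ^ (N i (sm-1)) ≤ Real.sqrt (Real.log t) :=
            (lt_of_lt_of_le hp hmono).le
          calc (1.1:ℝ) ^ (N i (sm-1)) * 1.1 ≤ Real.sqrt (Real.log t) * 1.1 :=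
              mul_le_mul_of_nonneg_right hp' (by norm_num)
            _ = 1.1 * Real.sqrt (Real.log t) := by ring
      have hdiff : hatμ0 i sm - hatμ i sm
          ≤ max 0 (μ i - μ tgt) + 4 * attackBeta σ K δ (N i sm)
            + 3 * σ * (1.1:ℝ) ^ (N i sm) := by
        have hmax : μ i - μ tgt ≤ max 0 (μ i - μ tgt) := le_max_right _ _
        rw [heq]
        linarith
      have hNtR : (N i sm : ℝ) ≤ (N i t : ℝ) := by exact_mod_cast hnt
      calc ∑ s ∈ (Finset.Icc 1 t).filter (fun s => I s = i), α s
          = (N i sm : ℝ) * (hatμ0 i sm - hatμ i sm) := by rw [hsplit, hAeq]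
        _ ≤ (N i sm : ℝ) * (max 0 (μ i - μ tgt) + 4 * attackBeta σ K δ (N i sm)
              + 3 * σ * (1.1:ℝ) ^ (N i sm)) :=
            mul_le_mul_of_nonneg_left hdiff hnR.le
        _ = (N i sm : ℝ) * max 0 (μ i - μ tgt)
              + 4 * ((N i sm : ℝ) * attackBeta σ K δ (N i sm))
              + (N i sm : ℝ) * (3 * σ * (1.1:ℝ) ^ (N i sm)) := by ring
        _ ≤ (N i t : ℝ) * max 0 (μ i - μ tgt)
              + 4 * ((N i t : ℝ) * attackBeta σ K δ (N i t))
              + (N i t : ℝ) * (3 * σ * (1.1 * Real.sqrt (Real.log t))) := by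
            have h1 : (N i sm : ℝ) * max 0 (μ i - μ tgt)
                ≤ (N i t : ℝ) * max 0 (μ i - μ tgt) :=
              mul_le_mul_of_nonneg_right hNtR hmax0
            have h2 : (N i sm : ℝ) * attackBeta σ K δ (N i sm)
                ≤ (N i t : ℝ) * attackBeta σ K δ (N i t) :=
              mul_attackBeta_mono hK hδ hδ' hn1 hnt
            have h3a : (N i sm : ℝ) * (3 * σ * (1.1:ℝ) ^ (N i sm))
                ≤ (N i sm : ℝ) * (3 * σ * (1.1 * Real.sqrt (Real.log t))) := by
              apply mul_le_mul_of_nonneg_left _ hnR.le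
              apply mul_le_mul_of_nonneg_left hθ (by linarith)
            have h3b : (N i sm : ℝ) * (3 * σ * (1.1 * Real.sqrt (Real.log t)))
                ≤ (N i t : ℝ) * (3 * σ * (1.1 * Real.sqrt (Real.log t))) := by
              apply mul_le_mul_of_nonneg_right hNtR (by positivity)
            linarith
        _ = (N i t : ℝ) * (max 0 (μ i - μ tgt) + 4 * attackBeta σ K δ (N i t)
              + 3 * 1.1 * σ * Real.sqrt (Real.log t)) := by ring
  refine ⟨hCOUNT, ?_⟩
  rw [hsum_eq]
  exact Finset.sum_le_sum (fun i hmem => hper i (by simpa using hmem))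



/-- Theorem 1 (probabilistic form). Run the UCB-with-attack process (`θ = 1.1`)
path-wise on pre-attack reward streams `r⁰_i(n) = X i n ω`, where for each arm `i`
the sequence `(X i n)_{n ≥ 1}` is i.i.d. with `X i n − μ i` sub-Gaussian with
variance proxy `σ²`. Then with probability at least `1 − δ`, simultaneously for
all rounds `t > K`: every non-target arm `i` satisfies
`N_i(t) ≤ ⌈log_θ √(log t)⌉`, and the cumulative attack cost satisfies
`∑_{s ≤ t} |α_s| ≤ ∑_{i ≠ tgt} N_i(t)·(Δ_i⁺ + 4β(N_i(t)) + 3θσ√(log t))`.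

Process data (per sample `ω`): `tgt` is the target arm, `I t ω` the arm pulled in
round `t`, `N i t ω` the number of pulls of arm `i` in rounds `1..t`,
`hatμ0 i t ω` / `hatμ i t ω` the pre- and post-attack empirical means of arm `i`
after `t` rounds, and `α t ω` the attack in round `t`. -/
theorem ucb_attack_succeeds_whp
    {Ω : Type*} [MeasureSpace Ω] [IsProbabilityMeasure (ℙ : Measure Ω)]
    (σ δ : ℝ) (K : ℕ) (hσ : 0 < σ) (hK : 1 ≤ K) (hδ : 0 < δ) (hδ' : δ ≤ 1 / 2)
    (μ : Fin K → ℝ) (X : Fin K → ℕ → Ω → ℝ) (tgt : Fin K)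
    -- the reward streams: i.i.d., sub-Gaussian with variance proxy σ²
    (hmeas : ∀ i n, Measurable (X i n))
    (hindep : ∀ i, iIndepFun (X i) ℙ)
    (hident : ∀ i n, IdentDistrib (X i n) (X i 1) ℙ ℙ)
    (hint : ∀ i n (s : ℝ), Integrable (fun ω => Real.exp (s * (X i n ω - μ i))) ℙ)
    (hsub : ∀ i n (s : ℝ),
      ∫ ω, Real.exp (s * (X i n ω - μ i)) ≤ Real.exp (s ^ 2 * σ ^ 2 / 2))
    -- the process, defined path-wise
    (I : ℕ → Ω → Fin K) (N : Fin K → ℕ → Ω → ℕ)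
    (hatμ0 hatμ : Fin K → ℕ → Ω → ℝ) (α : ℕ → Ω → ℝ)
    -- pull counts
    (hN : ∀ ω i t, N i t ω = ((Finset.Icc 1 t).filter (fun s => I s ω = i)).card)
    -- initialization: arm `tgt` is pulled in round 1, each arm once in rounds 1..K
    (hI1 : ∀ ω, I 1 ω = tgt)
    (hinit : ∀ ω i, N i K ω = 1)
    -- pre-attack empirical means
    (hμ0 : ∀ ω i t, 1 ≤ N i t ω →
      hatμ0 i t ω = (∑ j ∈ Finset.Icc 1 (N i t ω), X i j ω) / (N i t ω))
    -- post-attack empirical means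
    (hμ : ∀ ω i t, 1 ≤ N i t ω →
      hatμ i t ω = ((∑ j ∈ Finset.Icc 1 (N i t ω), X i j ω)
        - ∑ s ∈ (Finset.Icc 1 t).filter (fun s => I s ω = i), α s ω) / (N i t ω))
    -- UCB arm selection after the initialization rounds
    (hUCB : ∀ ω t, K < t → ∀ i : Fin K,
      hatμ i (t - 1) ω + 3 * σ * Real.sqrt (Real.log t / N i (t - 1) ω)
        ≤ hatμ (I t ω) (t - 1) ω + 3 * σ * Real.sqrt (Real.log t / N (I t ω) (t - 1) ω))
    -- pulls of the target arm are never attacked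
    (hαtgt : ∀ ω t, I t ω = tgt → α t ω = 0)
    -- attack rule: after any pull of a non-target arm, the smallest (in absolute
    -- value) nonnegative attack ensuring the post-attack mean drops below
    -- `hatμ tgt t − 2β(N_tgt(t)) − 3σθ^{N_i(t)}`
    (hatk : ∀ ω t, 1 ≤ t → I t ω ≠ tgt →
      0 ≤ α t ω ∧
      hatμ (I t ω) t ω ≤ hatμ tgt t ω - 2 * attackBeta σ K δ (N tgt t ω)
        - 3 * σ * (1.1 : ℝ) ^ (N (I t ω) t ω) ∧
      (α t ω ≠ 0 → hatμ (I t ω) t ω = hatμ tgt t ω - 2 * attackBeta σ K δ (N tgt t ω)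
        - 3 * σ * (1.1 : ℝ) ^ (N (I t ω) t ω))) :
    ENNReal.ofReal (1 - δ) ≤
      ℙ {ω | ∀ t, K < t →
        (∀ i : Fin K, i ≠ tgt →
          (N i t ω : ℤ) ≤ ⌈Real.logb 1.1 (Real.sqrt (Real.log t))⌉) ∧
        ∑ s ∈ Finset.Icc 1 t, |α s ω| ≤
          ∑ i ∈ Finset.univ.filter (fun i => i ≠ tgt),
            (N i t ω : ℝ) * (max 0 (μ i - μ tgt) + 4 * attackBeta σ K δ (N i t ω)
              + 3 * 1.1 * σ * Real.sqrt (Real.log t))} := by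
  have hG := good_event_prob σ δ K hσ hK hδ hδ' μ X hmeas hindep hint hsub
  refine le_trans hG (measure_mono ?_)
  intro ω hω
  simp only [Set.mem_setOf_eq] at hω ⊢
  intro t ht
  exact det_lemma σ δ K hσ hK hδ hδ' μ (fun i n => X i n ω) tgt (fun s => I s ω)
    (fun i u => N i u ω) (fun i u => hatμ0 i u ω) (fun i u => hatμ i u ω) (fun s => α s ω)
    (fun i u => hN ω i u) (hI1 ω) (fun i => hinit ω i) (fun i u h => hμ0 ω i u h)
    (fun i u h => hμ ω i u h) (fun u hu i => hUCB ω u hu i) (fun u h => hαtgt ω u h)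
    (fun u h1 h2 => hatk ω u h1 h2) (fun i n h => hω i n h) t ht
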